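/- Let A be a finite set, β > 0, Q : A → ℝ, and π a probability distribution on A satisfying π(a) ∝ π(a)·exp(β Q(a)) (i.e., π(a)·Z = π(a)·exp(β Q(a)) with Z = Σ_{a'} π(a') exp(β Q(a'))). Then (i) Q(a) = (log Z)/β for every a with π(a) > 0, and (ii) if additionally Q(a') ≤ (log Z)/β for every a' with π(a') = 0, then π maximizes Σ_a π'(a) Q(a) over all probability distributions π' on A. -/

import Mathlib

/-- At a fixed point `π(a)·Z = π(a)·exp(β Q(a))` of the Boltzmann improvement operator:
(i) `Q(a) = (log Z)/β` on the support of `π`; (ii) if off-support actions have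
`Q ≤ (log Z)/β`, then `π` maximizes the expected value `Σ_a π'(a) Q(a)` over all
probability distributions `π'` on `A`. -/
theorem stmt8 {A : Type*} [Fintype A]
    (π : A → ℝ) (hπnn : ∀ a, 0 ≤ π a) (hπsum : ∑ a, π a = 1)
    (Q : A → ℝ) (β : ℝ) (hβ : 0 < β)
    (Z : ℝ) (hZ : Z = ∑ a', π a' * Real.exp (β * Q a'))
    (hfix : ∀ a, π a * Z = π a * Real.exp (β * Q a)) :
    (∀ a, 0 < π a → Q a = Real.log Z / β) ∧
      ((∀ a, π a = 0 → Q a ≤ Real.log Z / β) →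
        ∀ π' : A → ℝ, (∀ a, 0 ≤ π' a) → (∑ a, π' a = 1) →
          (∑ a, π' a * Q a) ≤ ∑ a, π a * Q a) := by
  -- there exists a with π a > 0
  have hex : ∃ a, 0 < π a := by
    by_contra h
    push_neg at h
    have : ∑ a, π a = 0 := Finset.sum_eq_zero fun a _ => le_antisymm (h a) (hπnn a)
    simp [this] at hπsum
  obtain ⟨a₀, ha₀⟩ := hex
  have hZpos : 0 < Z := by
    have h1 : Z = Real.exp (β * Q a₀) := by
      have := hfix a₀
      exact mul_left_cancel₀ (ne_of_gt ha₀) this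
    rw [h1]; exact Real.exp_pos _
  have hsupp : ∀ a, 0 < π a → Q a = Real.log Z / β := by
    intro a ha
    have h1 : Z = Real.exp (β * Q a) := mul_left_cancel₀ (ne_of_gt ha) (hfix a)
    have : Real.log Z = β * Q a := by rw [h1, Real.log_exp]
    field_simp [this]
    rw [this]; ring
  refine ⟨hsupp, fun hoff π' hπ'nn hπ'sum => ?_⟩
  have h1 : ∑ a, π a * Q a = Real.log Z / β := by
    have : ∀ a ∈ Finset.univ, π a * Q a = π a * (Real.log Z / β) := by
      intro a _
      rcases eq_or_lt_of_le (hπnn a) with h | h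
      · simp [← h]
      · rw [hsupp a h]
    rw [Finset.sum_congr rfl this, ← Finset.sum_mul, hπsum, one_mul]
  rw [h1]
  calc ∑ a, π' a * Q a ≤ ∑ a, π' a * (Real.log Z / β) := by
        apply Finset.sum_le_sum
        intro a _
        apply mul_le_mul_of_nonneg_left _ (hπ'nn a)
        rcases eq_or_lt_of_le (hπnn a) with h | h
        · exact hoff a h.symm
        · exact le_of_eq (hsupp a h)
    _ = Real.log Z / β := by rw [← Finset.sum_mul, hπ'sum, one_mul]
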